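/- arXiv:1303.2956 — 2 statements merged into one kernel-verified Lean document; each statement's English description precedes it below -/
import Mathlib

section
/- Let γ(s,t) be an arclength-parametrized inextensible flow of pseudo null curves in E⁴₁ with pseudo null Frenet frame {T, N, B₁, B₂}, curvatures k₁ = 1, k₂, k₃, and flow ∂γ/∂t = α₁T + α₂N + α₃B₁ + α₄B₂ (so ∂α₁/∂s = α₄). Setting ψ₁ = ⟨∂N/∂t, B₁⟩, ψ₂ = ⟨∂N/∂t, B₂⟩, ψ₃ = ⟨∂B₁/∂t, B₂⟩, the frame evolves by: ∂N/∂t = −(∂α₄/∂s − α₃k₂) T + ψ₂ N + ψ₁ B₁, ∂B₁/∂t = −(∂α₃/∂s + α₂k₂ − α₄k₃) T + ψ₃ N − ψ₁ B₂, and ∂B₂/∂t = −(∂α₂/∂s + α₁ + α₃k₃) T − ψ₃ B₁ − ψ₂ B₂. -/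
/-!
Formalization of inextensible flows of partially null / pseudo null curves in
Minkowski space-time `E⁴₁` (ℝ⁴ with signature (-,+,+,+)).
-/

noncomputable section

/-- The Minkowski bilinear form on `ℝ⁴` with signature `(-,+,+,+)`. -/
def mink (v w : Fin 4 → ℝ) : ℝ :=
  -(v 0 * w 0) + v 1 * w 1 + v 2 * w 2 + v 3 * w 3

/-- The Minkowski norm `‖v‖ = √|⟨v,v⟩|`. -/
def mnorm (v : Fin 4 → ℝ) : ℝ := Real.sqrt |mink v v|

lemma mink_comm (v w : Fin 4 → ℝ) : mink v w = mink w v := by simp [mink]; ring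

lemma mink_deriv {f g : ℝ → (Fin 4 → ℝ)} {f' g' : Fin 4 → ℝ} {t : ℝ}
    (hf : HasDerivAt f f' t) (hg : HasDerivAt g g' t) :
    HasDerivAt (fun x => mink (f x) (g x)) (mink f' (g t) + mink (f t) g') t := by
  have hf' := hasDerivAt_pi.1 hf
  have hg' := hasDerivAt_pi.1 hg
  simp only [mink]
  refine (((((hf' 0).mul (hg' 0)).neg.add ((hf' 1).mul (hg' 1))).add
    ((hf' 2).mul (hg' 2))).add ((hf' 3).mul (hg' 3))).congr_deriv ?_
  ring

lemma mink_comb_left (a b c d : ℝ) (x y z w u : Fin 4 → ℝ) :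
    mink (a • x + b • y + c • z + d • w) u
      = a * mink x u + b * mink y u + c * mink z u + d * mink w u := by
  simp [mink]; ring

lemma mink_comb_right (a b c : ℝ) (y z w u : Fin 4 → ℝ) :
    mink u (a • y + b • z + c • w)
      = a * mink u y + b * mink u z + c * mink u w := by
  simp [mink]; ring

lemma mink_sub_left (a b u : Fin 4 → ℝ) : mink (a - b) u = mink a u - mink b u := by
  simp [mink]; ring

lemma diffAt_slice₁ {G : Type*} [NormedAddCommGroup G] [NormedSpace ℝ G]
    {F : ℝ → ℝ → G} (h : ContDiff ℝ (⊤ : ℕ∞) (fun p : ℝ × ℝ => F p.1 p.2)) (s t : ℝ) :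
    DifferentiableAt ℝ (fun x => F x t) s :=
  ((h.differentiable (by simp)) (s, t)).comp (f := fun x : ℝ => (x, t)) s
    (differentiableAt_id.prodMk (differentiableAt_const t))

lemma diffAt_slice₂ {G : Type*} [NormedAddCommGroup G] [NormedSpace ℝ G]
    {F : ℝ → ℝ → G} (h : ContDiff ℝ (⊤ : ℕ∞) (fun p : ℝ × ℝ => F p.1 p.2)) (s t : ℝ) :
    DifferentiableAt ℝ (fun τ => F s τ) t :=
  ((h.differentiable (by simp)) (s, t)).comp t
    ((differentiableAt_const s).prodMk differentiableAt_id)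

/-- The Minkowski-linear functional `u ↦ mink w u`. -/
def minkR (w : Fin 4 → ℝ) : (Fin 4 → ℝ) →ₗ[ℝ] ℝ where
  toFun u := mink w u
  map_add' a b := by simp [mink]; ring
  map_smul' c a := by simp [mink]; ring

lemma frame_expand (T N B₁ B₂ : Fin 4 → ℝ)
    (hTT : mink T T = 1) (hB₁B₁ : mink B₁ B₁ = 1) (hNN : mink N N = 0)
    (hB₂B₂ : mink B₂ B₂ = 0) (hNB₂ : mink N B₂ = 1) (hTN : mink T N = 0)
    (hTB₁ : mink T B₁ = 0) (hTB₂ : mink T B₂ = 0) (hNB₁ : mink N B₁ = 0)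
    (hB₁B₂ : mink B₁ B₂ = 0) (v : Fin 4 → ℝ) :
    v = mink v T • T + mink v B₂ • N + mink v B₁ • B₁ + mink v N • B₂ := by
  have li : LinearIndependent ℝ ![T, N, B₁, B₂] := by
    rw [Fintype.linearIndependent_iff]
    intro g hg
    rw [Fin.sum_univ_four] at hg
    simp only [Matrix.cons_val_zero, Matrix.cons_val_one, Matrix.head_cons,
      Matrix.cons_val_two, Matrix.tail_cons, Matrix.cons_val_three] at hg
    have key : ∀ u, g 0 * mink T u + g 1 * mink N u + g 2 * mink B₁ u + g 3 * mink B₂ u = 0 := by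
      intro u
      rw [← mink_comb_left, hg]
      simp [mink]
    have h0 := key T; have h1 := key N; have h2 := key B₁; have h3 := key B₂
    rw [hTT, mink_comm N T, hTN, mink_comm B₁ T, hTB₁, mink_comm B₂ T, hTB₂] at h0
    rw [hTN, hNN, mink_comm B₁ N, hNB₁, mink_comm B₂ N, hNB₂] at h1
    rw [hTB₁, hNB₁, hB₁B₁, mink_comm B₂ B₁, hB₁B₂] at h2
    rw [hTB₂, hNB₂, hB₁B₂, hB₂B₂] at h3
    intro i
    fin_cases i <;> simp_all
  have card_eq : Fintype.card (Fin 4) = Module.finrank ℝ (Fin 4 → ℝ) := by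
    simp [Module.finrank_fin_fun]
  have hspan : Submodule.span ℝ (Set.range ![T, N, B₁, B₂]) = ⊤ := by
    have := (basisOfLinearIndependentOfCardEqFinrank li card_eq).span_eq
    rwa [coe_basisOfLinearIndependentOfCardEqFinrank] at this
  set w := v - (mink v T • T + mink v B₂ • N + mink v B₁ • B₁ + mink v N • B₂) with hw
  have hφ : minkR w = 0 := by
    apply LinearMap.ext_on hspan
    rintro x ⟨i, rfl⟩
    have comp : ∀ u, mink w u = mink v u -
        (mink v T * mink T u + mink v B₂ * mink N u + mink v B₁ * mink B₁ u
          + mink v N * mink B₂ u) := by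
      intro u; rw [hw, mink_sub_left, mink_comb_left]
    fin_cases i
    · show mink w T = 0
      rw [comp T, hTT, mink_comm N T, hTN, mink_comm B₁ T, hTB₁, mink_comm B₂ T, hTB₂]; ring
    · show mink w N = 0
      rw [comp N, hTN, hNN, mink_comm B₁ N, hNB₁, mink_comm B₂ N, hNB₂]; ring
    · show mink w B₁ = 0
      rw [comp B₁, hTB₁, hNB₁, hB₁B₁, mink_comm B₂ B₁, hB₁B₂]; ring
    · show mink w B₂ = 0
      rw [comp B₂, hTB₂, hNB₂, hB₁B₂, hB₂B₂]; ring
  have hw0 : ∀ u, mink w u = 0 := fun u => by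
    have := DFunLike.congr_fun hφ u
    simpa [minkR] using this
  have e0 := hw0 ![1, 0, 0, 0]
  have e1 := hw0 ![0, 1, 0, 0]
  have e2 := hw0 ![0, 0, 1, 0]
  have e3 := hw0 ![0, 0, 0, 1]
  simp [mink] at e0 e1 e2 e3
  have : w = 0 := by
    funext i; fin_cases i <;> simp_all
  exact sub_eq_zero.mp this

lemma deriv_swap {G : Type*} [NormedAddCommGroup G] [NormedSpace ℝ G]
    (F : ℝ × ℝ → G) (hF : ContDiff ℝ (⊤ : ℕ∞) F) (s t : ℝ) :
    deriv (fun τ => deriv (fun x => F (x, τ)) s) t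
      = deriv (fun x => deriv (fun τ => F (x, τ)) t) s := by
  have hdiff : Differentiable ℝ F := hF.differentiable (by simp)
  set f' := fderiv ℝ F with hf'def
  have hf' : ∀ p, HasFDerivAt F (f' p) p := fun p => (hdiff p).hasFDerivAt
  have hf'C : ContDiff ℝ (⊤ : ℕ∞) f' := by
    apply hF.fderiv_right
    exact_mod_cast le_refl _
  have hf'diff : Differentiable ℝ f' := hf'C.differentiable (by simp)
  set f'' := fderiv ℝ f' (s, t) with hf''def
  have hsecond : HasFDerivAt f' f'' (s, t) := (hf'diff (s, t)).hasFDerivAt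
  have hsymm := second_derivative_symmetric hf' hsecond
  have hH : ∀ τ x : ℝ, HasDerivAt (fun y => F (y, τ)) (f' (x, τ) (1, 0)) x := by
    intro τ x
    have h1 : HasDerivAt (fun y : ℝ => (y, τ)) ((1 : ℝ), (0 : ℝ)) x :=
      (hasDerivAt_id x).prodMk (hasDerivAt_const x τ)
    exact (hf' (x, τ)).comp_hasDerivAt x h1
  have hV : ∀ x τ : ℝ, HasDerivAt (fun τ' => F (x, τ')) (f' (x, τ) (0, 1)) τ := by
    intro x τ
    have h1 : HasDerivAt (fun τ' : ℝ => (x, τ')) ((0 : ℝ), (1 : ℝ)) τ :=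
      (hasDerivAt_const τ x).prodMk (hasDerivAt_id τ)
    exact (hf' (x, τ)).comp_hasDerivAt τ h1
  have lhs : deriv (fun τ => deriv (fun x => F (x, τ)) s) t = f'' (0, 1) (1, 0) := by
    have he : (fun τ => deriv (fun x => F (x, τ)) s) = fun τ => f' (s, τ) (1, 0) :=
      funext fun τ => (hH τ s).deriv
    rw [he]
    have hg : HasDerivAt (fun τ => f' (s, τ)) (f'' (0, 1)) t := by
      have h1 : HasDerivAt (fun τ' : ℝ => (s, τ')) ((0 : ℝ), (1 : ℝ)) t :=
        (hasDerivAt_const t s).prodMk (hasDerivAt_id t)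
      exact hsecond.comp_hasDerivAt t h1
    exact (((ContinuousLinearMap.apply ℝ G ((1 : ℝ), (0 : ℝ))).hasFDerivAt).comp_hasDerivAt
      t hg).deriv
  have rhs : deriv (fun x => deriv (fun τ => F (x, τ)) t) s = f'' (1, 0) (0, 1) := by
    have he : (fun x => deriv (fun τ => F (x, τ)) t) = fun x => f' (x, t) (0, 1) :=
      funext fun x => (hV x t).deriv
    rw [he]
    have hg : HasDerivAt (fun x => f' (x, t)) (f'' (1, 0)) s := by
      have h1 : HasDerivAt (fun y : ℝ => (y, t)) ((1 : ℝ), (0 : ℝ)) s :=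
        (hasDerivAt_id s).prodMk (hasDerivAt_const s t)
      exact hsecond.comp_hasDerivAt s h1
    exact (((ContinuousLinearMap.apply ℝ G ((0 : ℝ), (1 : ℝ))).hasFDerivAt).comp_hasDerivAt
      s hg).deriv
  rw [lhs, rhs, hsymm]

theorem frame_evolution_pseudo_null
    (γ T N B₁ B₂ : ℝ → ℝ → (Fin 4 → ℝ))
    (k₁ k₂ k₃ α₁ α₂ α₃ α₄ : ℝ → ℝ → ℝ)
    (ψ₁ ψ₂ ψ₃ : ℝ → ℝ → ℝ)
    (hγsmooth : ContDiff ℝ (⊤ : ℕ∞) (fun p : ℝ × ℝ => γ p.1 p.2))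
    (hTsmooth : ContDiff ℝ (⊤ : ℕ∞) (fun p : ℝ × ℝ => T p.1 p.2))
    (hNsmooth : ContDiff ℝ (⊤ : ℕ∞) (fun p : ℝ × ℝ => N p.1 p.2))
    (hB₁smooth : ContDiff ℝ (⊤ : ℕ∞) (fun p : ℝ × ℝ => B₁ p.1 p.2))
    (hB₂smooth : ContDiff ℝ (⊤ : ℕ∞) (fun p : ℝ × ℝ => B₂ p.1 p.2))
    (hk₂smooth : ContDiff ℝ (⊤ : ℕ∞) (fun p : ℝ × ℝ => k₂ p.1 p.2))
    (hk₃smooth : ContDiff ℝ (⊤ : ℕ∞) (fun p : ℝ × ℝ => k₃ p.1 p.2))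
    (hα₁smooth : ContDiff ℝ (⊤ : ℕ∞) (fun p : ℝ × ℝ => α₁ p.1 p.2))
    (hα₂smooth : ContDiff ℝ (⊤ : ℕ∞) (fun p : ℝ × ℝ => α₂ p.1 p.2))
    (hα₃smooth : ContDiff ℝ (⊤ : ℕ∞) (fun p : ℝ × ℝ => α₃ p.1 p.2))
    (hα₄smooth : ContDiff ℝ (⊤ : ℕ∞) (fun p : ℝ × ℝ => α₄ p.1 p.2))
    (hTT : ∀ s t : ℝ, mink (T s t) (T s t) = 1)
    (hB₁B₁ : ∀ s t : ℝ, mink (B₁ s t) (B₁ s t) = 1)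
    (hNN : ∀ s t : ℝ, mink (N s t) (N s t) = 0)
    (hB₂B₂ : ∀ s t : ℝ, mink (B₂ s t) (B₂ s t) = 0)
    (hNB₂ : ∀ s t : ℝ, mink (N s t) (B₂ s t) = 1)
    (hTN : ∀ s t : ℝ, mink (T s t) (N s t) = 0)
    (hTB₁ : ∀ s t : ℝ, mink (T s t) (B₁ s t) = 0)
    (hTB₂ : ∀ s t : ℝ, mink (T s t) (B₂ s t) = 0)
    (hNB₁ : ∀ s t : ℝ, mink (N s t) (B₁ s t) = 0)
    (hB₁B₂ : ∀ s t : ℝ, mink (B₁ s t) (B₂ s t) = 0)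
    -- arclength parametrization and pseudo null Frenet equations (k₁ = 1)
    (hk₁ : ∀ s t : ℝ, k₁ s t = 1)
    (hT : ∀ s t : ℝ, T s t = deriv (fun x => γ x t) s)
    (hunit : ∀ s t : ℝ, mnorm (deriv (fun x => γ x t) s) = 1)
    (hfr₁ : ∀ s t : ℝ, deriv (fun x => T x t) s = k₁ s t • N s t)
    (hfr₂ : ∀ s t : ℝ, deriv (fun x => N x t) s = k₂ s t • B₁ s t)
    (hfr₃ : ∀ s t : ℝ, deriv (fun x => B₁ x t) s = k₃ s t • N s t - k₂ s t • B₂ s t)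
    (hfr₄ : ∀ s t : ℝ, deriv (fun x => B₂ x t) s = -(k₁ s t) • T s t - k₃ s t • B₁ s t)
    (hflow : ∀ s t : ℝ, deriv (fun x => γ s x) t =
      α₁ s t • T s t + α₂ s t • N s t + α₃ s t • B₁ s t + α₄ s t • B₂ s t)
    -- inextensibility: ∂α₁/∂s = α₄
    (hinext : ∀ s t : ℝ, deriv (fun x => α₁ x t) s = α₄ s t)
    (hψ₁ : ∀ s t : ℝ, ψ₁ s t = mink (deriv (fun x => N s x) t) (B₁ s t))
    (hψ₂ : ∀ s t : ℝ, ψ₂ s t = mink (deriv (fun x => N s x) t) (B₂ s t))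
    (hψ₃ : ∀ s t : ℝ, ψ₃ s t = mink (deriv (fun x => B₁ s x) t) (B₂ s t)) :
    ∀ s t : ℝ,
      deriv (fun x => N s x) t =
        -(deriv (fun x => α₄ x t) s - α₃ s t * k₂ s t) • T s t +
        ψ₂ s t • N s t + ψ₁ s t • B₁ s t ∧
      deriv (fun x => B₁ s x) t =
        -(deriv (fun x => α₃ x t) s + α₂ s t * k₂ s t - α₄ s t * k₃ s t) • T s t +
        ψ₃ s t • N s t - ψ₁ s t • B₂ s t ∧
      deriv (fun x => B₂ s x) t =
        -(deriv (fun x => α₂ x t) s + α₁ s t + α₃ s t * k₃ s t) • T s t -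
        ψ₃ s t • B₁ s t - ψ₂ s t • B₂ s t := by
  intro s t
  -- t-derivatives of the frame at (s,t)
  set Nt := deriv (fun x => N s x) t with hNtdef
  set B₁t := deriv (fun x => B₁ s x) t with hB₁tdef
  set B₂t := deriv (fun x => B₂ s x) t with hB₂tdef
  set Tt := deriv (fun x => T s x) t with hTtdef
  have hNt : HasDerivAt (fun x => N s x) Nt t := (diffAt_slice₂ hNsmooth s t).hasDerivAt
  have hB₁t : HasDerivAt (fun x => B₁ s x) B₁t t := (diffAt_slice₂ hB₁smooth s t).hasDerivAt
  have hB₂t : HasDerivAt (fun x => B₂ s x) B₂t t := (diffAt_slice₂ hB₂smooth s t).hasDerivAt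
  have hTt : HasDerivAt (fun x => T s x) Tt t := (diffAt_slice₂ hTsmooth s t).hasDerivAt
  -- abbreviations for s-derivatives of the αᵢ
  set d₂ := deriv (fun x => α₂ x t) s with hd₂
  set d₃ := deriv (fun x => α₃ x t) s with hd₃
  set d₄ := deriv (fun x => α₄ x t) s with hd₄
  -- compute Tt by swapping mixed partials
  have key : Tt = deriv (fun x => α₁ x t • T x t + α₂ x t • N x t
      + α₃ x t • B₁ x t + α₄ x t • B₂ x t) s := by
    have h1 : (fun τ => T s τ) = fun τ => deriv (fun x => γ x τ) s := funext fun τ => hT s τ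
    calc Tt = deriv (fun τ => deriv (fun x => γ x τ) s) t := by rw [hTtdef, h1]
      _ = deriv (fun x => deriv (fun τ => γ x τ) t) s :=
          deriv_swap (fun p : ℝ × ℝ => γ p.1 p.2) hγsmooth s t
      _ = _ := by
          congr 1
          funext x
          exact hflow x t
  have hα₁s : HasDerivAt (fun x => α₁ x t) (α₄ s t) s := by
    have h := (diffAt_slice₁ hα₁smooth s t).hasDerivAt
    rwa [hinext s t] at h
  have hα₂s : HasDerivAt (fun x => α₂ x t) d₂ s := (diffAt_slice₁ hα₂smooth s t).hasDerivAt
  have hα₃s : HasDerivAt (fun x => α₃ x t) d₃ s := (diffAt_slice₁ hα₃smooth s t).hasDerivAt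
  have hα₄s : HasDerivAt (fun x => α₄ x t) d₄ s := (diffAt_slice₁ hα₄smooth s t).hasDerivAt
  have hTs : HasDerivAt (fun x => T x t) (N s t) s := by
    have h := (diffAt_slice₁ hTsmooth s t).hasDerivAt
    rwa [hfr₁ s t, hk₁ s t, one_smul] at h
  have hNs : HasDerivAt (fun x => N x t) (k₂ s t • B₁ s t) s := by
    have h := (diffAt_slice₁ hNsmooth s t).hasDerivAt
    rwa [hfr₂ s t] at h
  have hB₁s : HasDerivAt (fun x => B₁ x t) (k₃ s t • N s t - k₂ s t • B₂ s t) s := by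
    have h := (diffAt_slice₁ hB₁smooth s t).hasDerivAt
    rwa [hfr₃ s t] at h
  have hB₂s : HasDerivAt (fun x => B₂ x t) (-(1 : ℝ) • T s t - k₃ s t • B₁ s t) s := by
    have h := (diffAt_slice₁ hB₂smooth s t).hasDerivAt
    rwa [hfr₄ s t, hk₁ s t] at h
  have hsum := (((hα₁s.smul hTs).add (hα₂s.smul hNs)).add (hα₃s.smul hB₁s)).add
    (hα₄s.smul hB₂s)
  have hTt_val : Tt = (α₁ s t + d₂ + α₃ s t * k₃ s t) • N s t
      + (α₂ s t * k₂ s t + d₃ - α₄ s t * k₃ s t) • B₁ s t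
      + (d₄ - α₃ s t * k₂ s t) • B₂ s t := by
    rw [key, HasDerivAt.deriv (f := fun x => α₁ x t • T x t + α₂ x t • N x t
      + α₃ x t • B₁ x t + α₄ x t • B₂ x t) hsum]
    module
  -- Minkowski products of Tt with the frame
  have mNTt : mink (N s t) Tt = d₄ - α₃ s t * k₂ s t := by
    rw [hTt_val, mink_comb_right, hNN s t, hNB₁ s t, hNB₂ s t]; ring
  have mB₁Tt : mink (B₁ s t) Tt = α₂ s t * k₂ s t + d₃ - α₄ s t * k₃ s t := by
    rw [hTt_val, mink_comb_right, mink_comm (B₁ s t) (N s t), hNB₁ s t, hB₁B₁ s t,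
      hB₁B₂ s t]; ring
  have mB₂Tt : mink (B₂ s t) Tt = α₁ s t + d₂ + α₃ s t * k₃ s t := by
    rw [hTt_val, mink_comb_right, mink_comm (B₂ s t) (N s t), hNB₂ s t,
      mink_comm (B₂ s t) (B₁ s t), hB₁B₂ s t, hB₂B₂ s t]; ring
  -- differentiating the constant Minkowski products in t
  have const_pair : ∀ {f g : ℝ → (Fin 4 → ℝ)} {f' g' : Fin 4 → ℝ} (c : ℝ),
      HasDerivAt f f' t → HasDerivAt g g' t → (∀ τ, mink (f τ) (g τ) = c) →
      mink f' (g t) + mink (f t) g' = 0 := by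
    intro f g f' g' c hf hg hconst
    have h := mink_deriv hf hg
    have h2 : HasDerivAt (fun τ => mink (f τ) (g τ)) 0 t := by
      have he : (fun τ => mink (f τ) (g τ)) = fun _ => c := funext hconst
      rw [he]; exact hasDerivAt_const t c
    exact h.unique h2
  have cNT := const_pair 0 hNt hTt (fun τ => by rw [mink_comm]; exact hTN s τ)
  have cNN := const_pair 0 hNt hNt (fun τ => hNN s τ)
  have cNB₁ := const_pair 0 hNt hB₁t (fun τ => hNB₁ s τ)
  have cNB₂ := const_pair 1 hNt hB₂t (fun τ => hNB₂ s τ)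
  have cB₁B₁ := const_pair 1 hB₁t hB₁t (fun τ => hB₁B₁ s τ)
  have cB₁B₂ := const_pair 0 hB₁t hB₂t (fun τ => hB₁B₂ s τ)
  have cB₂B₂ := const_pair 0 hB₂t hB₂t (fun τ => hB₂B₂ s τ)
  have cB₁T := const_pair 0 hB₁t hTt (fun τ => by rw [mink_comm]; exact hTB₁ s τ)
  have cB₂T := const_pair 0 hB₂t hTt (fun τ => by rw [mink_comm]; exact hTB₂ s τ)
  -- scalar products of the t-derivatives with the frame
  have mNtT : mink Nt (T s t) = -(d₄ - α₃ s t * k₂ s t) := by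
    rw [mNTt] at cNT; linarith
  have mNtN : mink Nt (N s t) = 0 := by
    rw [mink_comm (N s t) Nt] at cNN; linarith
  have mNtB₁ : mink Nt (B₁ s t) = ψ₁ s t := (hψ₁ s t).symm
  have mNtB₂ : mink Nt (B₂ s t) = ψ₂ s t := (hψ₂ s t).symm
  have mB₁tT : mink B₁t (T s t) = -(α₂ s t * k₂ s t + d₃ - α₄ s t * k₃ s t) := by
    rw [mB₁Tt] at cB₁T; linarith
  have mB₁tB₁ : mink B₁t (B₁ s t) = 0 := by
    rw [mink_comm (B₁ s t) B₁t] at cB₁B₁; linarith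
  have mB₁tB₂ : mink B₁t (B₂ s t) = ψ₃ s t := (hψ₃ s t).symm
  have mB₁tN : mink B₁t (N s t) = -(ψ₁ s t) := by
    rw [mNtB₁] at cNB₁; rw [mink_comm]; linarith
  have mB₂tT : mink B₂t (T s t) = -(α₁ s t + d₂ + α₃ s t * k₃ s t) := by
    rw [mB₂Tt] at cB₂T; linarith
  have mB₂tB₂ : mink B₂t (B₂ s t) = 0 := by
    rw [mink_comm (B₂ s t) B₂t] at cB₂B₂; linarith
  have mB₂tB₁ : mink B₂t (B₁ s t) = -(ψ₃ s t) := by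
    rw [mB₁tB₂] at cB₁B₂; rw [mink_comm]; linarith
  have mB₂tN : mink B₂t (N s t) = -(ψ₂ s t) := by
    rw [mNtB₂] at cNB₂; rw [mink_comm]; linarith
  have expand := frame_expand (T s t) (N s t) (B₁ s t) (B₂ s t) (hTT s t) (hB₁B₁ s t)
    (hNN s t) (hB₂B₂ s t) (hNB₂ s t) (hTN s t) (hTB₁ s t) (hTB₂ s t) (hNB₁ s t) (hB₁B₂ s t)
  refine ⟨?_, ?_, ?_⟩
  · rw [expand Nt, mNtT, mNtN, mNtB₁, mNtB₂]
    module
  · rw [expand B₁t, mB₁tT, mB₁tN, mB₁tB₁, mB₁tB₂]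
    module
  · rw [expand B₂t, mB₂tT, mB₂tN, mB₂tB₁, mB₂tB₂]
    module
end
end

section
/- Let γ(s,t) be an arclength-parametrized inextensible flow of pseudo null curves in E⁴₁ with pseudo null Frenet frame {T, N, B₁, B₂}, curvatures k₁ = 1, k₂, k₃, flow ∂γ/∂t = α₁T + α₂N + α₃B₁ + α₄B₂ (so ∂α₁/∂s = α₄), ψ₁ = ⟨∂N/∂t, B₁⟩ and ψ₂ = ⟨∂N/∂t, B₂⟩. Then the second curvature satisfies the evolution equation ∂k₂/∂t = ∂ψ₁/∂s + ψ₂k₂. -/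
/-!
Formalization of inextensible flows of partially null / pseudo null curves in
Minkowski space-time `E⁴₁` (ℝ⁴ with signature (-,+,+,+)).
-/

noncomputable section

lemma mink_smul_left (a : ℝ) (v w : Fin 4 → ℝ) : mink (a • v) w = a * mink v w := by
  simp only [mink, Pi.smul_apply, smul_eq_mul]; ring

lemma mink_comb (v : Fin 4 → ℝ) (a b : ℝ) (w u : Fin 4 → ℝ) :
    mink v (a • w - b • u) = a * mink v w - b * mink v u := by
  simp only [mink, Pi.sub_apply, Pi.smul_apply, smul_eq_mul]; ring

lemma HasDerivAt.mink' {f g : ℝ → Fin 4 → ℝ} {f' g' : Fin 4 → ℝ} {x : ℝ}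
    (hf : HasDerivAt f f' x) (hg : HasDerivAt g g' x) :
    HasDerivAt (fun u => mink (f u) (g u)) (mink f' (g x) + mink (f x) g') x := by
  have hfi : ∀ i, HasDerivAt (fun u => f u i) (f' i) x := hasDerivAt_pi.1 hf
  have hgi : ∀ i, HasDerivAt (fun u => g u i) (g' i) x := hasDerivAt_pi.1 hg
  have h := ((((hfi 0).mul (hgi 0)).neg.add ((hfi 1).mul (hgi 1))).add
      ((hfi 2).mul (hgi 2))).add ((hfi 3).mul (hgi 3))
  have heq : (fun u => mink (f u) (g u)) =
      fun u => -(f u 0 * g u 0) + f u 1 * g u 1 + f u 2 * g u 2 + f u 3 * g u 3 := by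
    funext u; rfl
  rw [heq]
  refine h.congr_deriv ?_
  simp only [mink]; ring

section TwoVar

variable {F : ℝ → ℝ → (Fin 4 → ℝ)}

lemma hasDerivAt_line1 (s t : ℝ) :
    HasDerivAt (fun x : ℝ => ((x, t) : ℝ × ℝ)) (1, 0) s :=
  (hasDerivAt_id s).prodMk (hasDerivAt_const s t)

lemma hasDerivAt_line2 (s t : ℝ) :
    HasDerivAt (fun y : ℝ => ((s, y) : ℝ × ℝ)) (0, 1) t :=
  (hasDerivAt_const t s).prodMk (hasDerivAt_id t)

lemma pd1 (hF : ContDiff ℝ (⊤ : ℕ∞) (fun p : ℝ × ℝ => F p.1 p.2)) (s t : ℝ) :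
    HasDerivAt (fun x => F x t)
      (fderiv ℝ (fun p : ℝ × ℝ => F p.1 p.2) (s, t) (1, 0)) s :=
  by have := ((hF.differentiable (by simp) (s, t)).hasFDerivAt).comp_hasDerivAt s (hasDerivAt_line1 s t); exact this

lemma pd2 (hF : ContDiff ℝ (⊤ : ℕ∞) (fun p : ℝ × ℝ => F p.1 p.2)) (s t : ℝ) :
    HasDerivAt (fun y => F s y)
      (fderiv ℝ (fun p : ℝ × ℝ => F p.1 p.2) (s, t) (0, 1)) t :=
  ((hF.differentiable (by simp) (s, t)).hasFDerivAt).comp_hasDerivAt t (hasDerivAt_line2 s t)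

lemma mixed (hF : ContDiff ℝ (⊤ : ℕ∞) (fun p : ℝ × ℝ => F p.1 p.2)) (s t : ℝ) :
    HasDerivAt (fun x => deriv (fun y => F x y) t)
      (fderiv ℝ (fderiv ℝ (fun p : ℝ × ℝ => F p.1 p.2)) (s, t) (1, 0) (0, 1)) s := by
  set Fu := fun p : ℝ × ℝ => F p.1 p.2 with hFu
  have hG : ContDiff ℝ (⊤ : ℕ∞) (fderiv ℝ Fu) := hF.fderiv_right (by exact_mod_cast le_top)
  have h1 : HasDerivAt (fun x => fderiv ℝ Fu (x, t))
      (fderiv ℝ (fderiv ℝ Fu) (s, t) (1, 0)) s :=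
    ((hG.differentiable (by simp) (s, t)).hasFDerivAt).comp_hasDerivAt s (hasDerivAt_line1 s t)
  have h2 := h1.clm_apply (hasDerivAt_const s ((0, 1) : ℝ × ℝ))
  have heq : (fun x => deriv (fun y => F x y) t) = fun x => fderiv ℝ Fu (x, t) (0, 1) :=
    funext fun x => (pd2 hF x t).deriv
  rw [heq]
  simpa using h2

lemma mixed' (hF : ContDiff ℝ (⊤ : ℕ∞) (fun p : ℝ × ℝ => F p.1 p.2)) (s t : ℝ) :
    HasDerivAt (fun y => deriv (fun x => F x y) s)
      (fderiv ℝ (fderiv ℝ (fun p : ℝ × ℝ => F p.1 p.2)) (s, t) (0, 1) (1, 0)) t := by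
  set Fu := fun p : ℝ × ℝ => F p.1 p.2 with hFu
  have hG : ContDiff ℝ (⊤ : ℕ∞) (fderiv ℝ Fu) := hF.fderiv_right (by exact_mod_cast le_top)
  have h1 : HasDerivAt (fun y => fderiv ℝ Fu (s, y))
      (fderiv ℝ (fderiv ℝ Fu) (s, t) (0, 1)) t :=
    ((hG.differentiable (by simp) (s, t)).hasFDerivAt).comp_hasDerivAt t (hasDerivAt_line2 s t)
  have h2 := h1.clm_apply (hasDerivAt_const t ((1, 0) : ℝ × ℝ))
  have heq : (fun y => deriv (fun x => F x y) s) = fun y => fderiv ℝ Fu (s, y) (1, 0) :=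
    funext fun y => (pd1 hF s y).deriv
  rw [heq]
  simpa using h2

lemma mixed_symm (hF : ContDiff ℝ (⊤ : ℕ∞) (fun p : ℝ × ℝ => F p.1 p.2)) (s t : ℝ) :
    fderiv ℝ (fderiv ℝ (fun p : ℝ × ℝ => F p.1 p.2)) (s, t) (1, 0) (0, 1) =
    fderiv ℝ (fderiv ℝ (fun p : ℝ × ℝ => F p.1 p.2)) (s, t) (0, 1) (1, 0) := by
  set Fu := fun p : ℝ × ℝ => F p.1 p.2 with hFu
  have hG : ContDiff ℝ (⊤ : ℕ∞) (fderiv ℝ Fu) := hF.fderiv_right (by exact_mod_cast le_top)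
  exact second_derivative_symmetric
    (fun y => (hF.differentiable (by simp) y).hasFDerivAt)
    ((hG.differentiable (by simp) (s, t)).hasFDerivAt) _ _

end TwoVar

theorem curvature_evolution_k2_pseudo_null
    (γ T N B₁ B₂ : ℝ → ℝ → (Fin 4 → ℝ))
    (k₁ k₂ k₃ α₁ α₂ α₃ α₄ : ℝ → ℝ → ℝ)
    (ψ₁ ψ₂ : ℝ → ℝ → ℝ)
    (hγsmooth : ContDiff ℝ (⊤ : ℕ∞) (fun p : ℝ × ℝ => γ p.1 p.2))
    (hTsmooth : ContDiff ℝ (⊤ : ℕ∞) (fun p : ℝ × ℝ => T p.1 p.2))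
    (hNsmooth : ContDiff ℝ (⊤ : ℕ∞) (fun p : ℝ × ℝ => N p.1 p.2))
    (hB₁smooth : ContDiff ℝ (⊤ : ℕ∞) (fun p : ℝ × ℝ => B₁ p.1 p.2))
    (hB₂smooth : ContDiff ℝ (⊤ : ℕ∞) (fun p : ℝ × ℝ => B₂ p.1 p.2))
    (hk₂smooth : ContDiff ℝ (⊤ : ℕ∞) (fun p : ℝ × ℝ => k₂ p.1 p.2))
    (hk₃smooth : ContDiff ℝ (⊤ : ℕ∞) (fun p : ℝ × ℝ => k₃ p.1 p.2))
    (hα₁smooth : ContDiff ℝ (⊤ : ℕ∞) (fun p : ℝ × ℝ => α₁ p.1 p.2))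
    (hα₂smooth : ContDiff ℝ (⊤ : ℕ∞) (fun p : ℝ × ℝ => α₂ p.1 p.2))
    (hα₃smooth : ContDiff ℝ (⊤ : ℕ∞) (fun p : ℝ × ℝ => α₃ p.1 p.2))
    (hα₄smooth : ContDiff ℝ (⊤ : ℕ∞) (fun p : ℝ × ℝ => α₄ p.1 p.2))
    (hTT : ∀ s t : ℝ, mink (T s t) (T s t) = 1)
    (hB₁B₁ : ∀ s t : ℝ, mink (B₁ s t) (B₁ s t) = 1)
    (hNN : ∀ s t : ℝ, mink (N s t) (N s t) = 0)
    (hB₂B₂ : ∀ s t : ℝ, mink (B₂ s t) (B₂ s t) = 0)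
    (hNB₂ : ∀ s t : ℝ, mink (N s t) (B₂ s t) = 1)
    (hTN : ∀ s t : ℝ, mink (T s t) (N s t) = 0)
    (hTB₁ : ∀ s t : ℝ, mink (T s t) (B₁ s t) = 0)
    (hTB₂ : ∀ s t : ℝ, mink (T s t) (B₂ s t) = 0)
    (hNB₁ : ∀ s t : ℝ, mink (N s t) (B₁ s t) = 0)
    (hB₁B₂ : ∀ s t : ℝ, mink (B₁ s t) (B₂ s t) = 0)
    -- arclength parametrization and pseudo null Frenet equations (k₁ = 1)
    (hk₁ : ∀ s t : ℝ, k₁ s t = 1)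
    (hT : ∀ s t : ℝ, T s t = deriv (fun x => γ x t) s)
    (hunit : ∀ s t : ℝ, mnorm (deriv (fun x => γ x t) s) = 1)
    (hfr₁ : ∀ s t : ℝ, deriv (fun x => T x t) s = k₁ s t • N s t)
    (hfr₂ : ∀ s t : ℝ, deriv (fun x => N x t) s = k₂ s t • B₁ s t)
    (hfr₃ : ∀ s t : ℝ, deriv (fun x => B₁ x t) s = k₃ s t • N s t - k₂ s t • B₂ s t)
    (hfr₄ : ∀ s t : ℝ, deriv (fun x => B₂ x t) s = -(k₁ s t) • T s t - k₃ s t • B₁ s t)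
    (hflow : ∀ s t : ℝ, deriv (fun x => γ s x) t =
      α₁ s t • T s t + α₂ s t • N s t + α₃ s t • B₁ s t + α₄ s t • B₂ s t)
    -- inextensibility: ∂α₁/∂s = α₄
    (hinext : ∀ s t : ℝ, deriv (fun x => α₁ x t) s = α₄ s t)
    (hψ₁ : ∀ s t : ℝ, ψ₁ s t = mink (deriv (fun x => N s x) t) (B₁ s t))
    (hψ₂ : ∀ s t : ℝ, ψ₂ s t = mink (deriv (fun x => N s x) t) (B₂ s t)) :
    ∀ s t : ℝ, deriv (fun x => k₂ s x) t =
      deriv (fun x => ψ₁ x t) s + ψ₂ s t * k₂ s t := by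
  intro s t
  set Nu := fun p : ℝ × ℝ => N p.1 p.2 with hNu
  -- partial derivatives
  set DtB₁ := fderiv ℝ (fun p : ℝ × ℝ => B₁ p.1 p.2) (s, t) (0, 1) with hDtB₁
  set DsB₁ := fderiv ℝ (fun p : ℝ × ℝ => B₁ p.1 p.2) (s, t) (1, 0) with hDsB₁
  set DtN := fderiv ℝ Nu (s, t) (0, 1) with hDtN
  -- ⟨B₁, ∂ₜB₁⟩ = 0
  have hB₁DtB₁ : mink (B₁ s t) DtB₁ = 0 := by
    have h1 := (pd2 hB₁smooth s t).mink' (pd2 hB₁smooth s t)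
    rw [show (fun y => mink (B₁ s y) (B₁ s y)) = fun _ => (1 : ℝ) from
      funext fun y => hB₁B₁ s y] at h1
    have h2 := h1.unique (hasDerivAt_const t 1)
    rw [mink_comm] at h2
    linarith
  -- ⟨∂ₜN, N⟩ = 0
  have hDtNN : mink DtN (N s t) = 0 := by
    have h1 := (pd2 hNsmooth s t).mink' (pd2 hNsmooth s t)
    rw [show (fun y => mink (N s y) (N s y)) = fun _ => (0 : ℝ) from
      funext fun y => hNN s y] at h1
    have h2 := h1.unique (hasDerivAt_const t 0)
    rw [mink_comm (N s t) DtN] at h2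
    linarith
  -- evolution of k₂
  have hLHS : deriv (fun x => k₂ s x) t =
      mink (fderiv ℝ (fderiv ℝ Nu) (s, t) (0, 1) (1, 0)) (B₁ s t) := by
    have h := (mixed' hNsmooth s t).mink' (pd2 hB₁smooth s t)
    rw [show (fun y => mink (deriv (fun x => N x y) s) (B₁ s y)) = fun y => k₂ s y from
      funext fun y => by rw [hfr₂ s y, mink_smul_left, hB₁B₁, mul_one]] at h
    rw [h.deriv, hfr₂ s t, mink_smul_left, hB₁DtB₁, mul_zero, add_zero]
  -- evolution of ψ₁
  have hRHS : deriv (fun x => ψ₁ x t) s =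
      mink (fderiv ℝ (fderiv ℝ Nu) (s, t) (1, 0) (0, 1)) (B₁ s t) - k₂ s t * ψ₂ s t := by
    have h := (mixed hNsmooth s t).mink' (pd1 hB₁smooth s t)
    rw [show (fun x => mink (deriv (fun y => N x y) t) (B₁ x t)) = fun x => ψ₁ x t from
      funext fun x => (hψ₁ x t).symm] at h
    rw [h.deriv, (pd1 hB₁smooth s t).deriv.symm, hfr₃ s t, mink_comb, hψ₂ s t,
      (pd2 hNsmooth s t).deriv]
    rw [hDtNN, mul_zero, zero_sub]
    ring
  rw [hLHS, hRHS, mixed_symm hNsmooth s t]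
  ring
end
end
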